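/- Weighted tail-sum estimate: let p ∈ (0, 3/4), β ≥ 1 and α ∈ ℝ, and for n ≥ 2 set κₙ² = max_{⌊n/2⌋ ≤ i ≤ n} aᵢ² and t_{k,n} = (β κₙ² + vₙ − v_k)^{1/2} for 0 ≤ k ≤ n. Then there exists a constant C > 0 (depending only on p, α and β) such that, for all sufficiently large n, Σ_{k=⌊n/2⌋+1}^{n} t_{k,n}^{α} · a_k² / t_{k,n}² is at most C κₙ^{α} β^{α/2} if α < 0, at most C log n if α = 0, and at most C vₙ^{α/2} if α > 0. -/

import Mathlib

open MeasureTheory ProbabilityTheory Filter Set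

/-- The weights `aₙ = Γ(n)Γ(2p)/Γ(n+2p−1)` of the elephant random walk
(note that the formula also gives `a₁ = 1`). -/
noncomputable def erwA (p : ℝ) (n : ℕ) : ℝ :=
  Real.Gamma n * Real.Gamma (2 * p) / Real.Gamma ((n : ℝ) + 2 * p - 1)

/-- `vₙ = Σ_{i=1}^n aᵢ²`. -/
noncomputable def erwV (p : ℝ) (n : ℕ) : ℝ :=
  ∑ i ∈ Finset.Icc 1 n, (erwA p i) ^ 2

/-- `κₙ² = max_{⌊n/2⌋ ≤ i ≤ n} aᵢ²`. -/
noncomputable def erwKappaSq (p : ℝ) (n : ℕ) : ℝ :=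
  ⨆ i ∈ Set.Icc (n / 2) n, (erwA p i) ^ 2

/-- `t_{k,n} = (β κₙ² + vₙ − v_k)^{1/2}`. -/
noncomputable def erwT (p b : ℝ) (k n : ℕ) : ℝ :=
  Real.sqrt (b * erwKappaSq p n + erwV p n - erwV p k)

/- elementary step lemmas -/

lemma erw_sum_tele (g : ℕ → ℝ) {m n : ℕ} (h : m ≤ n) :
    ∑ k ∈ Finset.Icc (m + 1) n, (g (k - 1) - g k) = g m - g n := by
  induction n, h using Nat.le_induction with
  | base => rw [Finset.Icc_eq_empty (by omega)]; simp
  | succ n hmn ih =>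
      rw [Finset.sum_Icc_succ_top (by omega), ih]
      simp only [Nat.add_sub_cancel]
      ring

lemma erw_step_neg {γ x y : ℝ} (hγ : γ < 0) (hy : 0 < y) (hyx : y ≤ x) :
    (-γ) * (x ^ (γ - 1) * (x - y)) ≤ y ^ γ - x ^ γ := by
  have hx : 0 < x := lt_of_lt_of_le hy hyx
  have hr : 0 < y / x := div_pos hy hx
  have key : 1 + (-γ) * (1 - y / x) ≤ (y / x) ^ γ := by
    have hlog : Real.log (y / x) ≤ y / x - 1 := Real.log_le_sub_one_of_pos hr
    have h1 : γ * (y / x - 1) ≤ γ * Real.log (y / x) :=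
      mul_le_mul_of_nonpos_left hlog hγ.le
    calc 1 + (-γ) * (1 - y / x) = γ * (y / x - 1) + 1 := by ring
      _ ≤ γ * Real.log (y / x) + 1 := by linarith
      _ ≤ Real.exp (γ * Real.log (y / x)) := Real.add_one_le_exp _
      _ = (y / x) ^ γ := by rw [Real.rpow_def_of_pos hr, mul_comm]
  have hxγ : 0 < x ^ γ := Real.rpow_pos_of_pos hx γ
  have hyγ : y ^ γ = x ^ γ * (y / x) ^ γ := by
    rw [← Real.mul_rpow hx.le hr.le, mul_div_cancel₀ _ hx.ne']
  have hterm : x ^ (γ - 1) * (x - y) = x ^ γ * (1 - y / x) := by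
    rw [Real.rpow_sub hx, Real.rpow_one]
    field_simp
  calc (-γ) * (x ^ (γ - 1) * (x - y)) = x ^ γ * ((-γ) * (1 - y / x)) := by rw [hterm]; ring
    _ ≤ x ^ γ * ((y / x) ^ γ - 1) := by
        apply mul_le_mul_of_nonneg_left _ hxγ.le
        linarith
    _ = y ^ γ - x ^ γ := by rw [hyγ]; ring

lemma erw_step_pos {γ x y : ℝ} (hγ0 : 0 < γ) (hγ1 : γ ≤ 1) (hy : 0 < y) (hyx : y ≤ x) :
    γ * (x ^ (γ - 1) * (x - y)) ≤ x ^ γ - y ^ γ := by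
  have hx : 0 < x := lt_of_lt_of_le hy hyx
  have hr : 0 < y / x := div_pos hy hx
  have key : (y / x) ^ γ ≤ 1 + γ * (y / x - 1) := by
    have := rpow_one_add_le_one_add_mul_self (s := y / x - 1) (by linarith) hγ0.le hγ1
    simpa using this
  have hxγ : 0 < x ^ γ := Real.rpow_pos_of_pos hx γ
  have hyγ : y ^ γ = x ^ γ * (y / x) ^ γ := by
    rw [← Real.mul_rpow hx.le hr.le, mul_div_cancel₀ _ hx.ne']
  have hterm : x ^ (γ - 1) * (x - y) = x ^ γ * (1 - y / x) := by
    rw [Real.rpow_sub hx, Real.rpow_one]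
    field_simp
  calc γ * (x ^ (γ - 1) * (x - y)) = x ^ γ * (γ * (1 - y / x)) := by rw [hterm]; ring
    _ ≤ x ^ γ * (1 - (y / x) ^ γ) := by
        apply mul_le_mul_of_nonneg_left _ hxγ.le
        linarith
    _ = x ^ γ - y ^ γ := by rw [hyγ]; ring

lemma erw_step_log {x y : ℝ} (hy : 0 < y) (hyx : y ≤ x) :
    (x - y) / x ≤ Real.log x - Real.log y := by
  have hx : 0 < x := lt_of_lt_of_le hy hyx
  have h := Real.log_le_sub_one_of_pos (div_pos hy hx)
  rw [Real.log_div hy.ne' hx.ne'] at h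
  have h2 : (x - y) / x = 1 - y / x := by field_simp
  linarith

/- facts about erwA -/

lemma erwA_pos {p : ℝ} (hp0 : 0 < p) {i : ℕ} (hi : 1 ≤ i) : 0 < erwA p i := by
  have hi' : (1 : ℝ) ≤ i := by exact_mod_cast hi
  unfold erwA
  apply div_pos (mul_pos (Real.Gamma_pos_of_pos (by linarith)) (Real.Gamma_pos_of_pos (by linarith)))
  exact Real.Gamma_pos_of_pos (by linarith)

lemma erwA_rec {p : ℝ} (hp0 : 0 < p) {m : ℕ} (hm : 1 ≤ m) :
    erwA p (m + 1) * ((m : ℝ) + 2 * p - 1) = erwA p m * m := by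
  have hm' : (1 : ℝ) ≤ m := by exact_mod_cast hm
  have hΓ1 : Real.Gamma ((m : ℝ) + 1) = m * Real.Gamma m :=
    Real.Gamma_add_one (by linarith)
  have hΓ2 : Real.Gamma ((m : ℝ) + 2 * p - 1 + 1) = ((m : ℝ) + 2 * p - 1) * Real.Gamma ((m : ℝ) + 2 * p - 1) :=
    Real.Gamma_add_one (by nlinarith)
  have hΓpos : 0 < Real.Gamma ((m : ℝ) + 2 * p - 1) := Real.Gamma_pos_of_pos (by linarith)
  have hne : (m : ℝ) + 2 * p - 1 ≠ 0 := by nlinarith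
  unfold erwA
  push_cast
  rw [show (m : ℝ) + 1 + 2 * p - 1 = ((m : ℝ) + 2 * p - 1) + 1 by ring, hΓ1, hΓ2]
  rw [mul_comm ((m:ℝ) + 2 * p - 1) (Real.Gamma ((m:ℝ) + 2 * p - 1)), ← div_div,
    div_mul_cancel₀ _ hne]
  ring

lemma erwA_mul_le {p : ℝ} (hp0 : 0 < p) (hp34 : p < 3 / 4) {i n : ℕ} (hi : 1 ≤ i) (hin : i ≤ n) :
    (i : ℝ) * erwA p i ≤ (n : ℝ) * erwA p n := by
  induction n, hin using Nat.le_induction with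
  | base => exact le_refl _
  | succ n hn ih =>
      refine le_trans ih ?_
      have hn1 : 1 ≤ n := le_trans hi hn
      have hn' : (1 : ℝ) ≤ n := by exact_mod_cast hn1
      have hrec := erwA_rec hp0 hn1
      have hA : 0 < erwA p (n + 1) := erwA_pos hp0 (by omega)
      have : (n : ℝ) * erwA p n = erwA p (n + 1) * ((n : ℝ) + 2 * p - 1) := by
        rw [hrec]; ring
      rw [this]
      push_cast
      nlinarith

lemma erwA_le {p : ℝ} (hp0 : 0 < p) (hp34 : p < 3 / 4) {i n : ℕ} (hi : 1 ≤ i) (hin : i ≤ n) :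
    erwA p i ≤ (n : ℝ) * erwA p n := by
  have h := erwA_mul_le hp0 hp34 hi hin
  have hi' : (1 : ℝ) ≤ i := by exact_mod_cast hi
  have hA : 0 < erwA p i := erwA_pos hp0 hi
  nlinarith

lemma erwV_nonneg {p : ℝ} (n : ℕ) : 0 ≤ erwV p n :=
  Finset.sum_nonneg fun _ _ => sq_nonneg _

lemma erwV_mono {p : ℝ} {k n : ℕ} (h : k ≤ n) : erwV p k ≤ erwV p n :=
  Finset.sum_le_sum_of_subset_of_nonneg (Finset.Icc_subset_Icc_right h)
    (fun _ _ _ => sq_nonneg _)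

lemma erwV_succ {p : ℝ} (j : ℕ) : erwV p (j + 1) = erwV p j + erwA p (j + 1) ^ 2 := by
  unfold erwV
  rw [Finset.sum_Icc_succ_top (by omega)]

lemma erwV_sub {p : ℝ} {k : ℕ} (hk : 1 ≤ k) :
    erwV p k - erwV p (k - 1) = erwA p k ^ 2 := by
  obtain ⟨j, rfl⟩ := Nat.exists_eq_add_of_le hk
  simp only [Nat.add_sub_cancel_left]
  rw [show 1 + j = j + 1 by ring, erwV_succ]
  simp [Nat.add_sub_cancel]

lemma le_erwKappaSq {p : ℝ} (hp0 : 0 < p) (hp34 : p < 3 / 4) {n k : ℕ} (hn : 2 ≤ n)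
    (hk : k ∈ Set.Icc (n / 2) n) : erwA p k ^ 2 ≤ erwKappaSq p n := by
  have hbdd : BddAbove (Set.range fun i => ⨆ _ : i ∈ Set.Icc (n / 2) n, erwA p i ^ 2) := by
    refine ⟨((n : ℝ) * erwA p n) ^ 2, ?_⟩
    rintro x ⟨i, rfl⟩
    dsimp only
    by_cases h : i ∈ Set.Icc (n / 2) n
    · rw [ciSup_pos (f := fun _ => erwA p i ^ 2) h]
      have hi1 : 1 ≤ i := le_trans (by omega) h.1
      have hle := erwA_le hp0 hp34 hi1 h.2
      have hAi : 0 ≤ erwA p i := (erwA_pos hp0 hi1).le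
      exact pow_le_pow_left₀ hAi hle 2
    · rw [ciSup_neg (f := fun _ => erwA p i ^ 2) h, Real.sSup_empty]
      positivity
  calc erwA p k ^ 2 = ⨆ _ : k ∈ Set.Icc (n / 2) n, erwA p k ^ 2 := (ciSup_pos (f := fun _ => erwA p k ^ 2) hk).symm
    _ ≤ erwKappaSq p n := le_ciSup hbdd k

lemma erwKappaSq_le_erwV {p : ℝ} (hp0 : 0 < p) {n : ℕ} (hn : 2 ≤ n) :
    erwKappaSq p n ≤ erwV p n := by
  apply ciSup_le
  intro i
  by_cases h : i ∈ Set.Icc (n / 2) n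
  · rw [ciSup_pos (f := fun _ => erwA p i ^ 2) h]
    exact Finset.single_le_sum (f := fun j => erwA p j ^ 2) (fun j _ => sq_nonneg _)
      (Finset.mem_Icc.mpr ⟨le_trans (by omega) h.1, h.2⟩)
  · rw [ciSup_neg (f := fun _ => erwA p i ^ 2) h, Real.sSup_empty]
    exact erwV_nonneg n

lemma erwKappaSq_pos {p : ℝ} (hp0 : 0 < p) (hp34 : p < 3 / 4) {n : ℕ} (hn : 2 ≤ n) :
    0 < erwKappaSq p n := by
  have h := le_erwKappaSq hp0 hp34 hn (Set.mem_Icc.mpr ⟨Nat.div_le_self n 2, le_refl n⟩)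
  have := erwA_pos hp0 (show 1 ≤ n by omega)
  nlinarith

lemma erwV_le_kappa {p : ℝ} (hp0 : 0 < p) (hp34 : p < 3 / 4) {n : ℕ} (hn : 2 ≤ n) :
    erwV p n ≤ (n : ℝ) ^ 3 * erwKappaSq p n := by
  have hAn : 0 < erwA p n := erwA_pos hp0 (by omega)
  have hkap : erwA p n ^ 2 ≤ erwKappaSq p n :=
    le_erwKappaSq hp0 hp34 hn (Set.mem_Icc.mpr ⟨Nat.div_le_self n 2, le_refl n⟩)
  have h1 : erwV p n ≤ (n : ℝ) * ((n : ℝ) * erwA p n) ^ 2 := by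
    calc erwV p n ≤ ∑ _i ∈ Finset.Icc 1 n, ((n : ℝ) * erwA p n) ^ 2 := by
          apply Finset.sum_le_sum
          intro i hi
          rw [Finset.mem_Icc] at hi
          have hle := erwA_le hp0 hp34 hi.1 hi.2
          have hAi : 0 ≤ erwA p i := (erwA_pos hp0 hi.1).le
          exact pow_le_pow_left₀ hAi hle 2
      _ = (n : ℝ) * ((n : ℝ) * erwA p n) ^ 2 := by
          rw [Finset.sum_const, Nat.card_Icc]
          simp [Nat.add_sub_cancel]
  calc erwV p n ≤ (n : ℝ) * ((n : ℝ) * erwA p n) ^ 2 := h1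
    _ = (n : ℝ) ^ 3 * erwA p n ^ 2 := by ring
    _ ≤ (n : ℝ) ^ 3 * erwKappaSq p n := by
        apply mul_le_mul_of_nonneg_left hkap
        positivity

lemma erw_two_rpow_cancel (γ : ℝ) : (2:ℝ) ^ (1 - γ) * (2:ℝ) ^ (γ - 1) = 1 := by
  rw [← Real.rpow_add (by norm_num)]
  norm_num

lemma erw_base_double {γ x y : ℝ} (hγ : γ ≤ 1) (hy : 0 < y) (hx2 : x ≤ 2 * y) (hx : 0 < x) :
    y ^ (γ - 1) ≤ 2 ^ (1 - γ) * x ^ (γ - 1) := by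
  have h1 : x / 2 ≤ y := by linarith
  have h2 : y ^ (γ - 1) ≤ (x / 2) ^ (γ - 1) :=
    Real.rpow_le_rpow_of_nonpos (by linarith) h1 (by linarith)
  have h3 : (x / 2) ^ (γ - 1) = x ^ (γ - 1) / 2 ^ (γ - 1) :=
    Real.div_rpow hx.le (by norm_num) (γ - 1)
  have h4 : (0:ℝ) < 2 ^ (γ - 1) := Real.rpow_pos_of_pos (by norm_num) _
  have h5 : x ^ (γ - 1) / 2 ^ (γ - 1) = 2 ^ (1 - γ) * x ^ (γ - 1) := by
    rw [div_eq_iff h4.ne']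
    rw [mul_assoc, mul_comm (x ^ (γ-1)), ← mul_assoc, erw_two_rpow_cancel, one_mul]
  linarith

lemma erw_tail_neg {γ : ℝ} (hγ : γ < 0) {s : ℕ → ℝ} {m n : ℕ} (hmn : m ≤ n)
    (hpos : ∀ k, m ≤ k → k ≤ n → 0 < s k)
    (hmono : ∀ k, m + 1 ≤ k → k ≤ n → s k ≤ s (k - 1))
    (hdouble : ∀ k, m + 1 ≤ k → k ≤ n → s (k - 1) ≤ 2 * s k) :
    ∑ k ∈ Finset.Icc (m + 1) n, s k ^ (γ - 1) * (s (k - 1) - s k)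
      ≤ (2 ^ (1 - γ) / (-γ)) * s n ^ γ := by
  have hγ' : (0:ℝ) < -γ := by linarith
  have hCpos : (0:ℝ) ≤ 2 ^ (1 - γ) / (-γ) :=
    div_nonneg (Real.rpow_nonneg (by norm_num) _) hγ'.le
  have key : ∀ k ∈ Finset.Icc (m + 1) n,
      s k ^ (γ - 1) * (s (k - 1) - s k)
        ≤ (2 ^ (1 - γ) / (-γ)) * (-(s (k - 1) ^ γ) - -(s k ^ γ)) := by
    intro k hk
    rw [Finset.mem_Icc] at hk
    have hy : 0 < s k := hpos k (by omega) hk.2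
    have hyx : s k ≤ s (k - 1) := hmono k hk.1 hk.2
    have hx2 : s (k - 1) ≤ 2 * s k := hdouble k hk.1 hk.2
    have hx : 0 < s (k - 1) := lt_of_lt_of_le hy hyx
    have hstep := erw_step_neg hγ hy hyx
    have hbase := erw_base_double (by linarith : γ ≤ 1) hy hx2 hx
    calc s k ^ (γ - 1) * (s (k - 1) - s k)
        ≤ 2 ^ (1 - γ) * s (k - 1) ^ (γ - 1) * (s (k - 1) - s k) := by
          apply mul_le_mul_of_nonneg_right hbase (by linarith)
      _ = (2 ^ (1 - γ) / (-γ)) * ((-γ) * (s (k - 1) ^ (γ - 1) * (s (k - 1) - s k))) := by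
          have hγne : γ ≠ 0 := hγ.ne
          field_simp
      _ ≤ (2 ^ (1 - γ) / (-γ)) * (s k ^ γ - s (k - 1) ^ γ) :=
          mul_le_mul_of_nonneg_left hstep hCpos
      _ = (2 ^ (1 - γ) / (-γ)) * (-(s (k - 1) ^ γ) - -(s k ^ γ)) := by ring
  calc ∑ k ∈ Finset.Icc (m + 1) n, s k ^ (γ - 1) * (s (k - 1) - s k)
      ≤ ∑ k ∈ Finset.Icc (m + 1) n,
          (2 ^ (1 - γ) / (-γ)) * (-(s (k - 1) ^ γ) - -(s k ^ γ)) := Finset.sum_le_sum key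
    _ = (2 ^ (1 - γ) / (-γ)) * ∑ k ∈ Finset.Icc (m + 1) n,
          ((fun j => -(s j ^ γ)) (k - 1) - (fun j => -(s j ^ γ)) k) := by
          rw [Finset.mul_sum]
    _ = (2 ^ (1 - γ) / (-γ)) * (-(s m ^ γ) - -(s n ^ γ)) := by
          rw [erw_sum_tele (fun j => -(s j ^ γ)) hmn]
    _ ≤ (2 ^ (1 - γ) / (-γ)) * s n ^ γ := by
          apply mul_le_mul_of_nonneg_left _ hCpos
          have : 0 ≤ s m ^ γ := Real.rpow_nonneg (hpos m le_rfl hmn).le γ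
          linarith

lemma erw_tail_zero {s : ℕ → ℝ} {m n : ℕ} (hmn : m ≤ n)
    (hpos : ∀ k, m ≤ k → k ≤ n → 0 < s k)
    (hmono : ∀ k, m + 1 ≤ k → k ≤ n → s k ≤ s (k - 1))
    (hdouble : ∀ k, m + 1 ≤ k → k ≤ n → s (k - 1) ≤ 2 * s k) :
    ∑ k ∈ Finset.Icc (m + 1) n, s k ^ (-1 : ℝ) * (s (k - 1) - s k)
      ≤ 2 * (Real.log (s m) - Real.log (s n)) := by
  have key : ∀ k ∈ Finset.Icc (m + 1) n,
      s k ^ (-1 : ℝ) * (s (k - 1) - s k)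
        ≤ 2 * ((fun j => Real.log (s j)) (k - 1) - (fun j => Real.log (s j)) k) := by
    intro k hk
    rw [Finset.mem_Icc] at hk
    have hy : 0 < s k := hpos k (by omega) hk.2
    have hyx : s k ≤ s (k - 1) := hmono k hk.1 hk.2
    have hx2 : s (k - 1) ≤ 2 * s k := hdouble k hk.1 hk.2
    have hx : 0 < s (k - 1) := lt_of_lt_of_le hy hyx
    have hlog := erw_step_log hy hyx
    have h1 : s k ^ (-1 : ℝ) * (s (k - 1) - s k) = (s (k - 1) - s k) / s k := by
      rw [Real.rpow_neg_one]
      ring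
    have h2 : (s (k - 1) - s k) / s k ≤ 2 * ((s (k - 1) - s k) / s (k - 1)) := by
      rw [div_le_iff₀ hy]
      have h3 : (s (k - 1) - s k) / s (k - 1) * s (k-1) = s (k - 1) - s k := by
        field_simp
      nlinarith [div_nonneg (by linarith : (0:ℝ) ≤ s (k-1) - s k) hx.le,
        mul_le_mul_of_nonneg_left hx2 (div_nonneg (by linarith : (0:ℝ) ≤ s (k-1) - s k) hx.le)]
    dsimp only
    calc s k ^ (-1 : ℝ) * (s (k - 1) - s k) = (s (k - 1) - s k) / s k := h1
      _ ≤ 2 * ((s (k - 1) - s k) / s (k - 1)) := h2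
      _ ≤ 2 * (Real.log (s (k - 1)) - Real.log (s k)) := by linarith [hlog]
  calc ∑ k ∈ Finset.Icc (m + 1) n, s k ^ (-1 : ℝ) * (s (k - 1) - s k)
      ≤ ∑ k ∈ Finset.Icc (m + 1) n,
          2 * ((fun j => Real.log (s j)) (k - 1) - (fun j => Real.log (s j)) k) :=
        Finset.sum_le_sum key
    _ = 2 * ∑ k ∈ Finset.Icc (m + 1) n,
          ((fun j => Real.log (s j)) (k - 1) - (fun j => Real.log (s j)) k) := by
        rw [Finset.mul_sum]
    _ = 2 * (Real.log (s m) - Real.log (s n)) := by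
        rw [erw_sum_tele (fun j => Real.log (s j)) hmn]

lemma erw_tail_pos {γ : ℝ} (hγ : 0 < γ) {s : ℕ → ℝ} {m n : ℕ} (hmn : m ≤ n)
    (hpos : ∀ k, m ≤ k → k ≤ n → 0 < s k)
    (hmono : ∀ k, m + 1 ≤ k → k ≤ n → s k ≤ s (k - 1))
    (hdouble : ∀ k, m + 1 ≤ k → k ≤ n → s (k - 1) ≤ 2 * s k)
    (hm : ∀ k, m ≤ k → k ≤ n → s k ≤ s m) :
    ∑ k ∈ Finset.Icc (m + 1) n, s k ^ (γ - 1) * (s (k - 1) - s k)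
      ≤ (2 ^ (1 - γ) / γ + 1) * s m ^ γ := by
  have hsm : 0 < s m := hpos m le_rfl hmn
  have hsmγ : 0 ≤ s m ^ γ := (Real.rpow_pos_of_pos hsm γ).le
  have hC : (0:ℝ) ≤ 2 ^ (1 - γ) / γ := div_nonneg (Real.rpow_nonneg (by norm_num) _) hγ.le
  rcases le_or_gt γ 1 with hγ1 | hγ1
  · -- small exponent: telescoping with Bernoulli
    have key : ∀ k ∈ Finset.Icc (m + 1) n,
        s k ^ (γ - 1) * (s (k - 1) - s k)
          ≤ (2 ^ (1 - γ) / γ) * ((fun j => s j ^ γ) (k - 1) - (fun j => s j ^ γ) k) := by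
      intro k hk
      rw [Finset.mem_Icc] at hk
      have hy : 0 < s k := hpos k (by omega) hk.2
      have hyx : s k ≤ s (k - 1) := hmono k hk.1 hk.2
      have hx2 : s (k - 1) ≤ 2 * s k := hdouble k hk.1 hk.2
      have hx : 0 < s (k - 1) := lt_of_lt_of_le hy hyx
      have hstep := erw_step_pos hγ hγ1 hy hyx
      have hbase := erw_base_double (by linarith : γ ≤ 1) hy hx2 hx
      dsimp only
      calc s k ^ (γ - 1) * (s (k - 1) - s k)
          ≤ 2 ^ (1 - γ) * s (k - 1) ^ (γ - 1) * (s (k - 1) - s k) := by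
            apply mul_le_mul_of_nonneg_right hbase (by linarith)
        _ = (2 ^ (1 - γ) / γ) * (γ * (s (k - 1) ^ (γ - 1) * (s (k - 1) - s k))) := by
            have hγne : γ ≠ 0 := hγ.ne'
            field_simp
        _ ≤ (2 ^ (1 - γ) / γ) * (s (k - 1) ^ γ - s k ^ γ) :=
            mul_le_mul_of_nonneg_left hstep hC
    calc ∑ k ∈ Finset.Icc (m + 1) n, s k ^ (γ - 1) * (s (k - 1) - s k)
        ≤ ∑ k ∈ Finset.Icc (m + 1) n,
            (2 ^ (1 - γ) / γ) * ((fun j => s j ^ γ) (k - 1) - (fun j => s j ^ γ) k) :=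
          Finset.sum_le_sum key
      _ = (2 ^ (1 - γ) / γ) * ∑ k ∈ Finset.Icc (m + 1) n,
            ((fun j => s j ^ γ) (k - 1) - (fun j => s j ^ γ) k) := by rw [Finset.mul_sum]
      _ = (2 ^ (1 - γ) / γ) * (s m ^ γ - s n ^ γ) := by
          rw [erw_sum_tele (fun j => s j ^ γ) hmn]
      _ ≤ (2 ^ (1 - γ) / γ + 1) * s m ^ γ := by
          have h0 : 0 ≤ s n ^ γ := Real.rpow_nonneg (hpos n hmn le_rfl).le γ
          nlinarith [mul_nonneg hC h0, mul_nonneg hC hsmγ]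
  · -- large exponent: crude bound
    have key : ∀ k ∈ Finset.Icc (m + 1) n,
        s k ^ (γ - 1) * (s (k - 1) - s k)
          ≤ s m ^ (γ - 1) * ((fun j => s j) (k - 1) - (fun j => s j) k) := by
      intro k hk
      rw [Finset.mem_Icc] at hk
      have hy : 0 < s k := hpos k (by omega) hk.2
      have hyx : s k ≤ s (k - 1) := hmono k hk.1 hk.2
      have hkm : s k ≤ s m := hm k (by omega) hk.2
      have : s k ^ (γ - 1) ≤ s m ^ (γ - 1) :=
        Real.rpow_le_rpow hy.le hkm (by linarith)
      exact mul_le_mul_of_nonneg_right this (by linarith)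
    calc ∑ k ∈ Finset.Icc (m + 1) n, s k ^ (γ - 1) * (s (k - 1) - s k)
        ≤ ∑ k ∈ Finset.Icc (m + 1) n,
            s m ^ (γ - 1) * ((fun j => s j) (k - 1) - (fun j => s j) k) :=
          Finset.sum_le_sum key
      _ = s m ^ (γ - 1) * ∑ k ∈ Finset.Icc (m + 1) n,
            ((fun j => s j) (k - 1) - (fun j => s j) k) := by rw [Finset.mul_sum]
      _ = s m ^ (γ - 1) * (s m - s n) := by rw [erw_sum_tele (fun j => s j) hmn]
      _ ≤ s m ^ (γ - 1) * s m := by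
          apply mul_le_mul_of_nonneg_left _ (Real.rpow_nonneg hsm.le _)
          linarith [hpos n hmn le_rfl]
      _ = s m ^ γ := by
          rw [← Real.rpow_add_one hsm.ne']
          norm_num
      _ ≤ (2 ^ (1 - γ) / γ + 1) * s m ^ γ := by nlinarith

lemma erw_term_eq {p b : ℝ} (hp0 : 0 < p) (hp34 : p < 3 / 4) (hb : 1 ≤ b) {n k : ℕ}
    (hn : 2 ≤ n) (hk1 : n / 2 + 1 ≤ k) (hk2 : k ≤ n) (a : ℝ) :
    erwT p b k n ^ a * erwA p k ^ 2 / erwT p b k n ^ 2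
      = (b * erwKappaSq p n + erwV p n - erwV p k) ^ (a / 2 - 1)
        * ((b * erwKappaSq p n + erwV p n - erwV p (k - 1))
            - (b * erwKappaSq p n + erwV p n - erwV p k)) := by
  have hkap : 0 < erwKappaSq p n := erwKappaSq_pos hp0 hp34 hn
  have hv : erwV p k ≤ erwV p n := erwV_mono hk2
  have hs : 0 < b * erwKappaSq p n + erwV p n - erwV p k := by nlinarith
  have hdiff : (b * erwKappaSq p n + erwV p n - erwV p (k - 1))
      - (b * erwKappaSq p n + erwV p n - erwV p k) = erwA p k ^ 2 := by
    have h := erwV_sub (p := p) (show 1 ≤ k by omega)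
    linarith
  rw [hdiff]
  unfold erwT
  rw [Real.sq_sqrt hs.le, Real.sqrt_eq_rpow, ← Real.rpow_mul hs.le,
    show 1 / 2 * a = a / 2 by ring, Real.rpow_sub hs (a / 2) 1, Real.rpow_one]
  ring

/-- Weighted tail-sum estimate: for `p ∈ (0, 3/4)`, `β ≥ 1` and `α ∈ ℝ`, there is a constant
`C > 0` such that for all sufficiently large `n`,
`Σ_{k=⌊n/2⌋+1}^{n} t_{k,n}^α · a_k² / t_{k,n}²` is at most `C κₙ^α β^{α/2}` if `α < 0`,
at most `C log n` if `α = 0`, and at most `C vₙ^{α/2}` if `α > 0`. -/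
theorem erw_weighted_tail_sum (p : ℝ) (hp : p ∈ Set.Ioo (0 : ℝ) (3 / 4))
    (b : ℝ) (hb : 1 ≤ b) (a : ℝ) :
    ∃ C > (0 : ℝ), ∃ N : ℕ, ∀ n : ℕ, N ≤ n →
      ((a < 0 →
        ∑ k ∈ Finset.Icc (n / 2 + 1) n, erwT p b k n ^ a * (erwA p k) ^ 2 / erwT p b k n ^ 2
          ≤ C * Real.sqrt (erwKappaSq p n) ^ a * b ^ (a / 2)) ∧
      (a = 0 →
        ∑ k ∈ Finset.Icc (n / 2 + 1) n, erwT p b k n ^ a * (erwA p k) ^ 2 / erwT p b k n ^ 2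
          ≤ C * Real.log n) ∧
      (0 < a →
        ∑ k ∈ Finset.Icc (n / 2 + 1) n, erwT p b k n ^ a * (erwA p k) ^ 2 / erwT p b k n ^ 2
          ≤ C * erwV p n ^ (a / 2))) := by
  obtain ⟨hp0, hp34⟩ := hp
  have hb0 : 0 < b := lt_of_lt_of_le one_pos hb
  -- generic facts for n ≥ 2, packaged as a function of n
  have main : ∀ n : ℕ, 2 ≤ n → ∀ γ : ℝ,
      (∀ k, n / 2 ≤ k → k ≤ n → 0 < b * erwKappaSq p n + erwV p n - erwV p k) ∧
      (∀ k, n / 2 + 1 ≤ k → k ≤ n →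
        b * erwKappaSq p n + erwV p n - erwV p k
          ≤ b * erwKappaSq p n + erwV p n - erwV p (k - 1)) ∧
      (∀ k, n / 2 + 1 ≤ k → k ≤ n →
        b * erwKappaSq p n + erwV p n - erwV p (k - 1)
          ≤ 2 * (b * erwKappaSq p n + erwV p n - erwV p k)) ∧
      (∀ k, n / 2 ≤ k → k ≤ n →
        b * erwKappaSq p n + erwV p n - erwV p k
          ≤ b * erwKappaSq p n + erwV p n - erwV p (n / 2)) := by
    intro n hn γ
    have hkap : 0 < erwKappaSq p n := erwKappaSq_pos hp0 hp34 hn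
    have hbk : erwKappaSq p n ≤ b * erwKappaSq p n := by nlinarith
    refine ⟨?_, ?_, ?_, ?_⟩
    · intro k _ hk2
      have hv : erwV p k ≤ erwV p n := erwV_mono hk2
      nlinarith
    · intro k hk1 hk2
      have : erwV p (k - 1) ≤ erwV p k := erwV_mono (by omega)
      linarith
    · intro k hk1 hk2
      have hd : erwV p k - erwV p (k - 1) = erwA p k ^ 2 := erwV_sub (by omega)
      have hk : erwA p k ^ 2 ≤ erwKappaSq p n :=
        le_erwKappaSq hp0 hp34 hn (Set.mem_Icc.mpr ⟨by omega, hk2⟩)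
      have hv : erwV p k ≤ erwV p n := erwV_mono hk2
      linarith
    · intro k hk1 _
      have : erwV p (n / 2) ≤ erwV p k := erwV_mono hk1
      linarith
  rcases lt_trichotomy a 0 with ha | ha | ha
  · -- case a < 0
    refine ⟨2 ^ (1 - a / 2) / (-(a / 2)), by
      apply div_pos (Real.rpow_pos_of_pos (by norm_num) _) (by linarith), 2, fun n hn => ?_⟩
    refine ⟨fun _ => ?_, fun h => absurd (h ▸ ha) (lt_irrefl 0),
      fun h => absurd (ha.trans h) (lt_irrefl a)⟩
    obtain ⟨hpos, hmono, hdouble, hmax⟩ := main n hn (a / 2)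
    have hkap : 0 < erwKappaSq p n := erwKappaSq_pos hp0 hp34 hn
    have hsum : ∑ k ∈ Finset.Icc (n / 2 + 1) n,
        erwT p b k n ^ a * erwA p k ^ 2 / erwT p b k n ^ 2
        = ∑ k ∈ Finset.Icc (n / 2 + 1) n,
          (fun j => b * erwKappaSq p n + erwV p n - erwV p j) k ^ (a / 2 - 1)
            * ((fun j => b * erwKappaSq p n + erwV p n - erwV p j) (k - 1)
                - (fun j => b * erwKappaSq p n + erwV p n - erwV p j) k) := by
      apply Finset.sum_congr rfl
      intro k hk
      rw [Finset.mem_Icc] at hk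
      exact erw_term_eq hp0 hp34 hb hn hk.1 hk.2 a
    rw [hsum]
    have hle := erw_tail_neg (show a / 2 < 0 by linarith)
      (s := fun j => b * erwKappaSq p n + erwV p n - erwV p j)
      (Nat.div_le_self n 2)
      (fun k h1 h2 => hpos k h1 h2) (fun k h1 h2 => hmono k h1 h2)
      (fun k h1 h2 => hdouble k h1 h2)
    refine le_trans hle ?_
    have hsn : (fun j => b * erwKappaSq p n + erwV p n - erwV p j) n = b * erwKappaSq p n := by
      simp
    rw [show b * erwKappaSq p n + erwV p n - erwV p n = b * erwKappaSq p n from hsn]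
    have hrw : (b * erwKappaSq p n) ^ (a / 2)
        = Real.sqrt (erwKappaSq p n) ^ a * b ^ (a / 2) := by
      rw [Real.mul_rpow hb0.le hkap.le, Real.sqrt_eq_rpow, ← Real.rpow_mul hkap.le,
        show 1 / 2 * a = a / 2 by ring]
      ring
    rw [hrw]
    rw [← mul_assoc]
  · -- case a = 0
    subst ha
    refine ⟨8, by norm_num, 2, fun n hn => ?_⟩
    refine ⟨fun h => absurd h (lt_irrefl 0), fun _ => ?_, fun h => absurd h (lt_irrefl 0)⟩
    obtain ⟨hpos, hmono, hdouble, hmax⟩ := main n hn 0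
    have hkap : 0 < erwKappaSq p n := erwKappaSq_pos hp0 hp34 hn
    have hsum : ∑ k ∈ Finset.Icc (n / 2 + 1) n,
        erwT p b k n ^ (0:ℝ) * erwA p k ^ 2 / erwT p b k n ^ 2
        = ∑ k ∈ Finset.Icc (n / 2 + 1) n,
          (fun j => b * erwKappaSq p n + erwV p n - erwV p j) k ^ (-1 : ℝ)
            * ((fun j => b * erwKappaSq p n + erwV p n - erwV p j) (k - 1)
                - (fun j => b * erwKappaSq p n + erwV p n - erwV p j) k) := by
      apply Finset.sum_congr rfl
      intro k hk
      rw [Finset.mem_Icc] at hk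
      have := erw_term_eq hp0 hp34 hb hn hk.1 hk.2 0
      rw [show (0:ℝ) / 2 - 1 = -1 by norm_num] at this
      exact this
    rw [hsum]
    have hle := erw_tail_zero
      (s := fun j => b * erwKappaSq p n + erwV p n - erwV p j)
      (Nat.div_le_self n 2)
      (fun k h1 h2 => hpos k h1 h2) (fun k h1 h2 => hmono k h1 h2)
      (fun k h1 h2 => hdouble k h1 h2)
    refine le_trans hle ?_
    -- now: 2 * (log s_m - log s_n) ≤ 8 * log n
    have hn2 : (2:ℝ) ≤ (n:ℝ) := by exact_mod_cast hn
    have hsn_pos : (0:ℝ) < b * erwKappaSq p n := by nlinarith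
    have hsm : (fun j => b * erwKappaSq p n + erwV p n - erwV p j) (n / 2)
        ≤ (n:ℝ) ^ 4 * (b * erwKappaSq p n) := by
      dsimp only
      have e1 : erwV p n ≤ (n:ℝ) ^ 3 * erwKappaSq p n := erwV_le_kappa hp0 hp34 hn
      have e2 : (n:ℝ) ^ 3 * erwKappaSq p n ≤ (n:ℝ) ^ 3 * (b * erwKappaSq p n) := by
        apply mul_le_mul_of_nonneg_left (by nlinarith) (by positivity)
      have h8 : (8:ℝ) ≤ (n:ℝ) ^ 3 := by
        have := pow_le_pow_left₀ (by norm_num : (0:ℝ) ≤ 2) hn2 3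
        norm_num at this
        linarith
      have h1 : (1:ℝ) ≤ (n:ℝ) - 1 := by linarith
      have h2 : (0:ℝ) < (n:ℝ) ^ 3 := by positivity
      have h3 : (n:ℝ) ^ 3 * 1 ≤ (n:ℝ) ^ 3 * ((n:ℝ) - 1) := by
        apply mul_le_mul_of_nonneg_left h1 h2.le
      have e3 : (1 + (n:ℝ) ^ 3) * (b * erwKappaSq p n) ≤ (n:ℝ) ^ 4 * (b * erwKappaSq p n) := by
        apply mul_le_mul_of_nonneg_right (by nlinarith [h3, h8]) hsn_pos.le
      have e4 : 0 ≤ erwV p (n / 2) := erwV_nonneg _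
      nlinarith
    have hsn : (fun j => b * erwKappaSq p n + erwV p n - erwV p j) n = b * erwKappaSq p n := by
      simp
    have hlog : Real.log ((fun j => b * erwKappaSq p n + erwV p n - erwV p j) (n / 2))
        ≤ 4 * Real.log n + Real.log (b * erwKappaSq p n) := by
      have h1 := Real.log_le_log (hpos (n / 2) le_rfl (Nat.div_le_self n 2)) hsm
      rw [Real.log_mul (by positivity) hsn_pos.ne', Real.log_pow] at h1
      push_cast at h1
      linarith
    rw [show b * erwKappaSq p n + erwV p n - erwV p n = b * erwKappaSq p n from hsn]
    have hlogn : 0 ≤ Real.log n := Real.log_nonneg (by linarith)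
    nlinarith [hlog]
  · -- case 0 < a
    refine ⟨(2 ^ (1 - a / 2) / (a / 2) + 1) * (1 + b) ^ (a / 2), by
      have h1 : (0:ℝ) < 2 ^ (1 - a / 2) / (a / 2) :=
        div_pos (Real.rpow_pos_of_pos (by norm_num) _) (by linarith)
      have h2 : (0:ℝ) < (1 + b) ^ (a / 2) := Real.rpow_pos_of_pos (by linarith) _
      nlinarith, 2, fun n hn => ?_⟩
    refine ⟨fun h => absurd (h.trans ha) (lt_irrefl a), fun h => absurd (h ▸ ha) (lt_irrefl 0),
      fun _ => ?_⟩
    obtain ⟨hpos, hmono, hdouble, hmax⟩ := main n hn (a / 2)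
    have hkap : 0 < erwKappaSq p n := erwKappaSq_pos hp0 hp34 hn
    have hsum : ∑ k ∈ Finset.Icc (n / 2 + 1) n,
        erwT p b k n ^ a * erwA p k ^ 2 / erwT p b k n ^ 2
        = ∑ k ∈ Finset.Icc (n / 2 + 1) n,
          (fun j => b * erwKappaSq p n + erwV p n - erwV p j) k ^ (a / 2 - 1)
            * ((fun j => b * erwKappaSq p n + erwV p n - erwV p j) (k - 1)
                - (fun j => b * erwKappaSq p n + erwV p n - erwV p j) k) := by
      apply Finset.sum_congr rfl
      intro k hk
      rw [Finset.mem_Icc] at hk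
      exact erw_term_eq hp0 hp34 hb hn hk.1 hk.2 a
    rw [hsum]
    have hle := erw_tail_pos (show 0 < a / 2 by linarith)
      (s := fun j => b * erwKappaSq p n + erwV p n - erwV p j)
      (Nat.div_le_self n 2)
      (fun k h1 h2 => hpos k h1 h2) (fun k h1 h2 => hmono k h1 h2)
      (fun k h1 h2 => hdouble k h1 h2) (fun k h1 h2 => hmax k h1 h2)
    refine le_trans hle ?_
    -- (K+1) * s_m^(a/2) ≤ (K+1) * (1+b)^(a/2) * v_n^(a/2)
    have hK : (0:ℝ) < 2 ^ (1 - a / 2) / (a / 2) + 1 := by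
      have : (0:ℝ) < 2 ^ (1 - a / 2) / (a / 2) :=
        div_pos (Real.rpow_pos_of_pos (by norm_num) _) (by linarith)
      linarith
    have hsm_le : (fun j => b * erwKappaSq p n + erwV p n - erwV p j) (n / 2)
        ≤ (1 + b) * erwV p n := by
      dsimp only
      have e1 : erwKappaSq p n ≤ erwV p n := erwKappaSq_le_erwV hp0 hn
      have e2 : b * erwKappaSq p n ≤ b * erwV p n :=
        mul_le_mul_of_nonneg_left e1 hb0.le
      have e3 : 0 ≤ erwV p (n / 2) := erwV_nonneg _
      linarith
    have hsm_pos := hpos (n / 2) le_rfl (Nat.div_le_self n 2)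
    have hrp : ((fun j => b * erwKappaSq p n + erwV p n - erwV p j) (n / 2)) ^ (a / 2)
        ≤ ((1 + b) * erwV p n) ^ (a / 2) :=
      Real.rpow_le_rpow hsm_pos.le hsm_le (by linarith)
    have hsplit : ((1 + b) * erwV p n) ^ (a / 2)
        = (1 + b) ^ (a / 2) * erwV p n ^ (a / 2) := by
      have hv0 : 0 ≤ erwV p n := erwV_nonneg n
      exact Real.mul_rpow (by linarith) hv0
    calc (2 ^ (1 - a / 2) / (a / 2) + 1)
          * ((fun j => b * erwKappaSq p n + erwV p n - erwV p j) (n / 2)) ^ (a / 2)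
        ≤ (2 ^ (1 - a / 2) / (a / 2) + 1) * ((1 + b) * erwV p n) ^ (a / 2) :=
          mul_le_mul_of_nonneg_left hrp hK.le
      _ = (2 ^ (1 - a / 2) / (a / 2) + 1) * (1 + b) ^ (a / 2) * erwV p n ^ (a / 2) := by
          rw [hsplit]; ring
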